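/- Fix a finite set I of agents, a finite set C of categories, capacities q_c ∈ ℕ, a set C* ⊆ C of preferential treatment categories, and a precedence order whose restriction to C is a strict total order. Let P and P' be priority profiles such that P' is an i-improvement of P for some agent i. Let μ be an eligibility-compliant matching for the sequential reserve system with profile P that has maximum cardinality, is a maximum beneficiary assignment, and respects precedence over categories, and let μ' be such a matching for the system with profile P'. If μ(i) ≠ ∅, then μ'(i) ≠ ∅. -/

import Mathlib

open Finset

variable {I C : Type*}

/-- Agent `i` is eligible for category `c` when `i ≻_c ∅`. -/
def Eligible (prio : C → Option I → Option I → Prop) (i : I) (c : C) : Prop :=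
  prio c (some i) none

/-- `μ` is a matching: the set of agents assigned to each category `c`
has at most `q c` elements. -/
def IsMatching [Fintype I] [DecidableEq C] (q : C → ℕ) (μ : I → Option C) : Prop :=
  ∀ c : C, (Finset.univ.filter (fun i => μ i = some c)).card ≤ q c

/-- `μ` is eligibility-compliant: assigned agents are eligible. -/
def Compliant (prio : C → Option I → Option I → Prop) (μ : I → Option C) : Prop :=
  ∀ (i : I) (c : C), μ i = some c → Eligible prio i c

/-- The number of agents matched under `μ`. -/
def matchedCount [Fintype I] (μ : I → Option C) : ℕ :=
  (Finset.univ.filter (fun i => (μ i).isSome)).card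

/-- `μ` has maximum cardinality among eligibility-compliant matchings. -/
def MaxCard [Fintype I] [DecidableEq C] (q : C → ℕ)
    (prio : C → Option I → Option I → Prop) (μ : I → Option C) : Prop :=
  ∀ μ' : I → Option C, IsMatching q μ' → Compliant prio μ' →
    matchedCount μ' ≤ matchedCount μ

/-- Non-wastefulness: an eligible unmatched agent implies the category is full. -/
def NonWasteful [Fintype I] [DecidableEq C] (q : C → ℕ)
    (prio : C → Option I → Option I → Prop) (μ : I → Option C) : Prop :=
  ∀ (i : I) (c : C), Eligible prio i c → μ i = none →
    (Finset.univ.filter (fun j => μ j = some c)).card = q c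

/-- Respect for priorities: a matched agent has higher priority (at its
category) than every unmatched agent. -/
def RespectsPriorities (prio : C → Option I → Option I → Prop)
    (μ : I → Option C) : Prop :=
  ∀ (i i' : I) (c : C), μ i = some c → μ i' = none → prio c (some i) (some i')

/-- `μ'` is obtained from `μ` by a swap step at category `c`: an unmatched
agent `i`, eligible for `c`, replaces the `≻_c`-least agent `i'` currently
assigned to `c`, where `i ≻_c i'`. -/
def SwapStep (prio : C → Option I → Option I → Prop) (c : C)
    (μ μ' : I → Option C) : Prop :=
  ∃ i i' : I,
    μ i = none ∧ Eligible prio i c ∧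
    μ i' = some c ∧
    (∀ j : I, μ j = some c → j ≠ i' → prio c (some j) (some i')) ∧
    prio c (some i) (some i') ∧
    μ' i = some c ∧ μ' i' = none ∧
    (∀ j : I, j ≠ i → j ≠ i' → μ' j = μ j)

/-- One swap step between eligibility-compliant matchings. -/
def SwapRel [Fintype I] [DecidableEq C] (q : C → ℕ)
    (prio : C → Option I → Option I → Prop) (μ μ' : I → Option C) : Prop :=
  IsMatching q μ ∧ Compliant prio μ ∧ IsMatching q μ' ∧ Compliant prio μ' ∧
    ∃ c : C, SwapStep prio c μ μ'

/-- `μ` is terminal: no swap step applies to `μ`. -/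
def Terminal (prio : C → Option I → Option I → Prop) (μ : I → Option C) : Prop :=
  ¬ ∃ (i i' : I) (c : C),
      μ i = none ∧ Eligible prio i c ∧ μ i' = some c ∧
      (∀ j : I, μ j = some c → j ≠ i' → prio c (some j) (some i')) ∧
      prio c (some i) (some i')

/-- The strict part `▷` of the precedence preorder, extended to `C ∪ {∅}`
by `c ▷ ∅` for every category `c`. -/
def StrictPrec (prec : C → C → Prop) : Option C → Option C → Prop
  | some c, some c' => prec c c' ∧ ¬ prec c' c
  | some _, none => True
  | none, _ => False

/-- The number of agents assigned to preferential treatment categories. -/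
def benefCount [Fintype I] [DecidableEq C] (Cstar : Finset C)
    (μ : I → Option C) : ℕ :=
  ∑ c ∈ Cstar, (Finset.univ.filter (fun i => μ i = some c)).card

/-- `μ` is a maximum beneficiary assignment. -/
def MaxBenef [Fintype I] [DecidableEq C] (q : C → ℕ)
    (prio : C → Option I → Option I → Prop) (Cstar : Finset C)
    (μ : I → Option C) : Prop :=
  ∀ μ' : I → Option C, IsMatching q μ' → Compliant prio μ' →
    benefCount Cstar μ' ≤ benefCount Cstar μ

/-- Order preservation by swapping. -/
def OrderPresSwap (prio : C → Option I → Option I → Prop) (prec : C → C → Prop)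
    (μ : I → Option C) : Prop :=
  ¬ ∃ (i j : I) (ci cj : C),
      μ i = some ci ∧ μ j = some cj ∧
      StrictPrec prec (some cj) (some ci) ∧
      prio cj (some i) (some j) ∧
      Eligible prio j ci ∧ Eligible prio i cj

/-- Respect for precedence over categories. -/
def RespectsPrec [Fintype I] [DecidableEq C] (q : C → ℕ)
    (prio : C → Option I → Option I → Prop) (Cstar : Finset C)
    (prec : C → C → Prop) (μ : I → Option C) : Prop :=
  ¬ ∃ (i j : I) (cj : C),
      μ j = some cj ∧
      StrictPrec prec (some cj) (μ i) ∧
      prio cj (some i) (some j) ∧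
      ∃ μ' : I → Option C,
        IsMatching q μ' ∧ Compliant prio μ' ∧
        (∀ (k : I) (ck : C), μ k = some ck →
          StrictPrec prec (some ck) (some cj) → μ' k = μ k) ∧
        (∀ ℓ : I, μ ℓ = some cj → prio cj (some ℓ) (some i) → μ' ℓ = μ ℓ) ∧
        μ' i = some cj ∧
        MaxCard q prio μ' ∧ MaxBenef q prio Cstar μ'

/-- Order preservation for a hybrid sequential reserve system with open
categories `c01` (processed first) and `c02` (processed last). -/
def OrderPresHybrid (prio : C → Option I → Option I → Prop) (Cstar : Finset C)
    (c01 c02 : C) (μ : I → Option C) : Prop :=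
  ∀ (i j : I) (cj : C), μ j = some cj → prio cj (some i) (some j) →
    ((∀ ci : C, μ i = some ci → (ci ∈ Cstar ∨ ci = c02) →
        Eligible prio j ci → cj ≠ c01) ∧
     ((cj ∈ Cstar ∨ cj = c01) → Eligible prio i cj → μ i ≠ some c02))

/-- `P'` is an `i`-improvement of `P`: the orders agree off `i`, and `i`'s
priority weakly increases in every category. -/
def Improves (i : I) (P P' : C → Option I → Option I → Prop) : Prop :=
  ∀ c : C,
    (∀ x y : Option I, x ≠ some i → y ≠ some i → (P' c x y ↔ P c x y)) ∧
    (∀ x : Option I, x ≠ some i → P c (some i) x → P' c (some i) x)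


/-! ### Auxiliary machinery for the proof of Statement 13 -/

section Aux

open Finset

/-- count of agents assigned to category `c`. -/
def cnt [Fintype I] [DecidableEq C] (ν : I → Option C) (c : C) : ℕ :=
  (Finset.univ.filter (fun k => ν k = some c)).card

/-- matched count (same as `matchedCount`). -/
def mct [Fintype I] (ν : I → Option C) : ℕ :=
  (Finset.univ.filter (fun k => (ν k).isSome)).card

/-- hybrid matching: agents in `X` follow `μ`, others follow `μ'`. -/
def hyb [DecidableEq I] (μ μ' : I → Option C) (X : Finset I) : I → Option C :=
  fun k => if k ∈ X then μ k else μ' k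

lemma hyb_insert [DecidableEq I] (μ μ' : I → Option C) (X : Finset I) (x : I) :
    hyb μ μ' (insert x X) = Function.update (hyb μ μ' X) x (μ x) := by
  funext k
  by_cases hk : k = x
  · subst hk; simp [hyb, Function.update]
  · simp [hyb, Function.update, hk, Finset.mem_insert]

lemma hyb_empty [DecidableEq I] (μ μ' : I → Option C) : hyb μ μ' ∅ = μ' := by
  funext k; simp [hyb]

lemma hyb_mem [DecidableEq I] (μ μ' : I → Option C) {X : Finset I} {k : I} (h : k ∈ X) :
    hyb μ μ' X k = μ k := by simp [hyb, h]

lemma hyb_not_mem [DecidableEq I] (μ μ' : I → Option C) {X : Finset I} {k : I} (h : k ∉ X) :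
    hyb μ μ' X k = μ' k := by simp [hyb, h]

lemma filter_update [Fintype I] [DecidableEq I] (ν : I → Option C)
    (a : I) (v : Option C) (p : Option C → Prop) [DecidablePred p] :
    Finset.univ.filter (fun k => p (Function.update ν a v k)) =
      if p v then insert a ((Finset.univ.filter (fun k => p (ν k))).erase a)
      else (Finset.univ.filter (fun k => p (ν k))).erase a := by
  ext k
  by_cases hk : k = a
  · subst hk
    by_cases hv : p v <;> simp [Function.update, hv]
  · by_cases hv : p v <;>
      simp [Function.update, hk, hv, Finset.mem_erase, Finset.mem_insert]

lemma card_update_eq [Fintype I] [DecidableEq I] (ν : I → Option C)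
    (a : I) (v : Option C) (p : Option C → Prop) [DecidablePred p] :
    (Finset.univ.filter (fun k => p (Function.update ν a v k))).card
      + (if p (ν a) then 1 else 0)
    = (Finset.univ.filter (fun k => p (ν k))).card + (if p v then 1 else 0) := by
  rw [filter_update]
  have hmem : a ∈ Finset.univ.filter (fun k => p (ν k)) ↔ p (ν a) := by simp
  by_cases hv : p v <;> by_cases ha : p (ν a) <;>
    simp only [hv, ha, if_true, if_false]
  · rw [Finset.card_insert_of_notMem (by simp), Finset.card_erase_of_mem (hmem.2 ha)]
    have : 1 ≤ (Finset.univ.filter (fun k => p (ν k))).card :=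
      Finset.card_pos.2 ⟨a, hmem.2 ha⟩
    omega
  · rw [Finset.card_insert_of_notMem (by simp),
      Finset.erase_eq_of_notMem (fun h => ha (hmem.1 h))]
  · rw [Finset.card_erase_of_mem (hmem.2 ha)]
    have : 1 ≤ (Finset.univ.filter (fun k => p (ν k))).card :=
      Finset.card_pos.2 ⟨a, hmem.2 ha⟩
    omega
  · rw [Finset.erase_eq_of_notMem (fun h => ha (hmem.1 h))]

lemma cnt_update [Fintype I] [DecidableEq I] [DecidableEq C] (ν : I → Option C)
    (a : I) (v : Option C) (c : C) :
    cnt (Function.update ν a v) c + (if ν a = some c then 1 else 0)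
      = cnt ν c + (if v = some c then 1 else 0) :=
  card_update_eq ν a v (fun o => o = some c)

lemma mct_update [Fintype I] [DecidableEq I] (ν : I → Option C) (a : I) (v : Option C) :
    mct (Function.update ν a v) + (if (ν a).isSome then 1 else 0)
      = mct ν + (if v.isSome then 1 else 0) :=
  card_update_eq ν a v (fun o => o.isSome)

/-! strict-precedence facts -/

lemma sp_some_none (prec : C → C → Prop) (c : C) :
    StrictPrec prec (some c) (none : Option C) := trivial

lemma sp_irrefl (prec : C → C → Prop) (c : C) :
    ¬ StrictPrec prec (some c) (some c) := fun h => h.2 h.1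

lemma sp_flip (prec : C → C → Prop)
    (hTotal : ∀ a b : C, prec a b ∨ prec b a)
    (hAnti : ∀ a b : C, prec a b → prec b a → a = b)
    {a b : C} (hne : a ≠ b) (h : ¬ StrictPrec prec (some a) (some b)) :
    StrictPrec prec (some b) (some a) := by
  rcases hTotal a b with h1 | h1
  · have h2 : prec b a := by
      by_contra h2
      exact h ⟨h1, h2⟩
    exact absurd (hAnti a b h1 h2) hne
  · refine ⟨h1, fun h2 => hne (hAnti a b h2 h1)⟩

lemma sp_trans (prec : C → C → Prop)
    (hTrans : ∀ a b c : C, prec a b → prec b c → prec a c)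
    {a b c : C} (h1 : StrictPrec prec (some a) (some b))
    (h2 : StrictPrec prec (some b) (some c)) :
    StrictPrec prec (some a) (some c) :=
  ⟨hTrans a b c h1.1 h2.1, fun hca => h2.2 (hTrans c a b hca h1.1)⟩

lemma sp_trans2 (prec : C → C → Prop)
    (hTrans : ∀ a b c : C, prec a b → prec b c → prec a c)
    (hTotal : ∀ a b : C, prec a b ∨ prec b a)
    (hAnti : ∀ a b : C, prec a b → prec b a → a = b)
    {a b c : C} (h1 : StrictPrec prec (some a) (some b))
    (h2 : ¬ StrictPrec prec (some c) (some b)) :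
    StrictPrec prec (some a) (some c) := by
  have hbc : prec b c := by
    rcases hTotal b c with h | h
    · exact h
    · by_contra hbc
      exact h2 ⟨h, hbc⟩
  refine ⟨hTrans a b c h1.1 hbc, fun hca => ?_⟩
  have hcb : prec c b := hTrans c a b hca h1.1
  have hbceq : b = c := by
    by_contra hne
    have : prec b c := hbc
    exact hne (hAnti b c hbc hcb)
  subst hbceq
  exact h1.2 hca

/-- The full invariant carried by the chain recursion. -/
def ChainInv [Fintype I] [DecidableEq I] [DecidableEq C] (prec : C → C → Prop)
    (μ μ' : I → Option C) (i : I) (X Xpre YP : Finset I) (cur cmin : C)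
    (u' u'' : I) : Prop :=
  i ∈ X ∧
  (∀ k ∈ X, ∀ ck, μ' k = some ck → ¬ StrictPrec prec (some ck) (some cmin)) ∧
  (∀ k ∈ X, ∃ ck, μ k = some ck ∧ ¬ StrictPrec prec (some ck) (some cmin)) ∧
  (∀ c, cnt (hyb μ μ' X) c = cnt μ' c + (if c = cur then 1 else 0)) ∧
  (mct (hyb μ μ' X) = mct μ' + 1) ∧
  (¬ StrictPrec prec (some cur) (some cmin)) ∧
  Xpre ⊆ X ∧ i ∈ Xpre ∧
  (∀ c, cnt (hyb μ μ' Xpre) c = cnt μ' c + (if c = cmin then 1 else 0)) ∧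
  (mct (hyb μ μ' Xpre) = mct μ' + 1) ∧
  (∀ k ∈ Xpre, ∀ ck, μ' k = some ck → ¬ StrictPrec prec (some ck) (some cmin)) ∧
  (∀ k ∈ Xpre, μ' k ≠ some cmin) ∧
  u' ∈ Xpre ∧ μ u' = some cmin ∧
  (μ' u' = none ∨ ∃ c5, μ' u' = some c5 ∧ StrictPrec prec (some cmin) (some c5)) ∧
  (cur ≠ cmin →
    YP ⊆ X ∧ i ∉ YP ∧ u'' ∈ YP ∧ μ' u'' = some cmin ∧
    (∀ k ∈ YP, μ k ≠ some cmin) ∧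
    (∀ c, cnt (hyb μ' μ YP) c + (if c = cur then 1 else 0)
        = cnt μ c + (if c = cmin then 1 else 0)) ∧
    mct (hyb μ' μ YP) = mct μ)

end Aux
/-- With a strict total precedence order over categories, if
`P'` is an `i`-improvement of `P`, and `μ` (resp. `μ'`) is an
eligibility-compliant matching for the system with profile `P` (resp. `P'`)
with maximum cardinality and maximum beneficiary assignment respecting
precedence over categories, then `μ(i) ≠ ∅` implies `μ'(i) ≠ ∅`. -/
theorem SCU_respects_improvements
    [Fintype I] [Fintype C] [DecidableEq C]
    (q : C → ℕ) (Cstar : Finset C) (prec : C → C → Prop)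
    (hTrans : ∀ a b c : C, prec a b → prec b c → prec a c)
    (hTotal : ∀ a b : C, prec a b ∨ prec b a)
    (hAnti : ∀ a b : C, prec a b → prec b a → a = b)
    (P P' : C → Option I → Option I → Prop)
    (hP : ∀ c : C, IsStrictTotalOrder (Option I) (P c))
    (hP' : ∀ c : C, IsStrictTotalOrder (Option I) (P' c))
    (i : I) (himp : Improves i P P')
    (μ μ' : I → Option C)
    (hμ : IsMatching q μ) (hμc : Compliant P μ)
    (hmax : MaxCard q P μ) (hben : MaxBenef q P Cstar μ)
    (hresp : RespectsPrec q P Cstar prec μ)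
    (hμ' : IsMatching q μ') (hμ'c : Compliant P' μ')
    (hmax' : MaxCard q P' μ') (hben' : MaxBenef q P' Cstar μ')
    (hresp' : RespectsPrec q P' Cstar prec μ')
    (hi : μ i ≠ none) :
    μ' i ≠ none := by
  classical
  intro hni
  -- trichotomy / asymmetry for the priority orders
  have Ptri : ∀ (c : C) (x y : Option I), x = y ∨ P c x y ∨ P c y x := by
    intro c x y
    haveI := hP c
    rcases trichotomous_of (P c) x y with h | h | h
    · exact Or.inr (Or.inl h)
    · exact Or.inl h
    · exact Or.inr (Or.inr h)
  have Pasym : ∀ (c : C) (x y : Option I), P c x y → P c y x → False := by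
    intro c x y h1 h2
    haveI := hP c
    exact irrefl_of (P c) x (trans_of (P c) h1 h2)
  have P'tri : ∀ (c : C) (x y : Option I), x = y ∨ P' c x y ∨ P' c y x := by
    intro c x y
    haveI := hP' c
    rcases trichotomous_of (P' c) x y with h | h | h
    · exact Or.inr (Or.inl h)
    · exact Or.inl h
    · exact Or.inr (Or.inr h)
  have P'asym : ∀ (c : C) (x y : Option I), P' c x y → P' c y x → False := by
    intro c x y h1 h2
    haveI := hP' c
    exact irrefl_of (P' c) x (trans_of (P' c) h1 h2)
  -- transfer lemmas between the two profiles
  have T2 : ∀ (c : C) (x : Option I), x ≠ some i → P c (some i) x → P' c (some i) x :=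
    fun c => (himp c).2
  have T1 : ∀ (c : C) (k l : I), k ≠ i → l ≠ i →
      (P' c (some k) (some l) ↔ P c (some k) (some l)) := by
    intro c k l hk hl
    exact (himp c).1 (some k) (some l) (by simpa using hk) (by simpa using hl)
  have TE : ∀ (c : C) (k : I), k ≠ i → (Eligible P k c ↔ Eligible P' k c) := by
    intro c k hk
    exact ((himp c).1 (some k) none (by simpa using hk) (by simp)).symm
  have TEi : ∀ c : C, Eligible P i c → Eligible P' i c := fun c h => T2 c none (by simp) h
  -- cross compliance
  have hμc' : Compliant P' μ := by
    intro k c hk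
    by_cases hki : k = i
    · subst hki; exact TEi c (hμc k c hk)
    · exact (TE c k hki).1 (hμc k c hk)
  have hμ'cP : Compliant P μ' := by
    intro k c hk
    have hki : k ≠ i := by rintro rfl; rw [hni] at hk; exact nomatch hk
    exact (TE c k hki).2 (hμ'c k c hk)
  have MCeq : mct μ = mct μ' := le_antisymm (hmax' μ hμ hμc') (hmax μ' hμ' hμ'cP)
  -- goodness packagers
  have goodP' : ∀ ν : I → Option C, (∀ c, cnt ν c = cnt μ' c) → mct ν = mct μ' →
      Compliant P' ν → IsMatching q ν ∧ MaxCard q P' ν ∧ MaxBenef q P' Cstar ν := by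
    intro ν hc hm hcomp
    refine ⟨fun c => ?_, fun ρ h1 h2 => ?_, fun ρ h1 h2 => ?_⟩
    · show cnt ν c ≤ q c
      rw [hc c]; exact hμ' c
    · show matchedCount ρ ≤ matchedCount ν
      have hh : matchedCount ν = matchedCount μ' := hm
      rw [hh]; exact hmax' ρ h1 h2
    · show benefCount Cstar ρ ≤ benefCount Cstar ν
      have hbe : benefCount Cstar ν = benefCount Cstar μ' :=
        Finset.sum_congr rfl (fun c _ => hc c)
      rw [hbe]; exact hben' ρ h1 h2
  have goodP : ∀ ν : I → Option C, (∀ c, cnt ν c = cnt μ c) → mct ν = mct μ →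
      Compliant P ν → IsMatching q ν ∧ MaxCard q P ν ∧ MaxBenef q P Cstar ν := by
    intro ν hc hm hcomp
    refine ⟨fun c => ?_, fun ρ h1 h2 => ?_, fun ρ h1 h2 => ?_⟩
    · show cnt ν c ≤ q c
      rw [hc c]; exact hμ c
    · show matchedCount ρ ≤ matchedCount ν
      have hh : matchedCount ν = matchedCount μ := hm
      rw [hh]; exact hmax ρ h1 h2
    · show benefCount Cstar ρ ≤ benefCount Cstar ν
      have hbe : benefCount Cstar ν = benefCount Cstar μ :=
        Finset.sum_congr rfl (fun c _ => hc c)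
      rw [hbe]; exact hben ρ h1 h2
  -- E2: if the chain cannot be extended because every outside agent assigned by μ' to `cur`
  -- is also assigned by μ to `cur`, we get a matching of larger cardinality.
  have E2L : ∀ (X : Finset I) (cur : C),
      (∀ c, cnt (hyb μ μ' X) c = cnt μ' c + (if c = cur then 1 else 0)) →
      (mct (hyb μ μ' X) = mct μ' + 1) →
      (∀ x, x ∉ X → μ' x = some cur → μ x = some cur) → False := by
    intro X cur h4 h5 hfail
    have hcomp : Compliant P' (hyb μ μ' X) := by
      intro k c hk
      by_cases hkX : k ∈ X
      · rw [hyb_mem μ μ' hkX] at hk; exact hμc' k c hk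
      · rw [hyb_not_mem μ μ' hkX] at hk; exact hμ'c k c hk
    have hmatch : IsMatching q (hyb μ μ' X) := by
      intro c
      by_cases hc : c = cur
      · subst hc
        have hsub : Finset.univ.filter (fun k => hyb μ μ' X k = some c) ⊆
            Finset.univ.filter (fun k => μ k = some c) := by
          intro k hk
          simp only [Finset.mem_filter, Finset.mem_univ, true_and] at hk ⊢
          by_cases hkX : k ∈ X
          · rwa [hyb_mem μ μ' hkX] at hk
          · rw [hyb_not_mem μ μ' hkX] at hk; exact hfail k hkX hk
        calc (Finset.univ.filter (fun k => hyb μ μ' X k = some c)).card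
            ≤ (Finset.univ.filter (fun k => μ k = some c)).card :=
              Finset.card_le_card hsub
          _ ≤ q c := hμ c
      · show cnt (hyb μ μ' X) c ≤ q c
        rw [h4 c, if_neg hc]
        simpa [cnt] using hμ' c
    have hle : mct (hyb μ μ' X) ≤ mct μ' := hmax' (hyb μ μ' X) hmatch hcomp
    omega
  -- TERM: the chain has reached an agent matched by μ' but unmatched by μ.
  have TERM : ∀ (X Xpre YP : Finset I) (cur cmin : C) (u' u'' z : I),
      z ∉ X → μ' z = some cur → μ z = none →
      ChainInv prec μ μ' i X Xpre YP cur cmin u' u'' → False := by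
    intro X Xpre YP cur cmin u' u'' z hzX hz' hz0 hinv
    obtain ⟨h1, h2, h3, h4, h5, h6, h7, h8, h9, h10, h11, h12, h13, h14, h15, h16⟩ := hinv
    have hzi : z ≠ i := by
      rintro rfl
      exact hi hz0
    -- build the suffix witness package
    obtain ⟨σ, u2, hσc, hσm, hσu2, hu2', hu2m, hu2i, hA, hB, hcompσ⟩ :
        ∃ (σ : I → Option C) (u2 : I),
          (∀ c, cnt σ c = cnt μ c + (if c = cmin then 1 else 0)) ∧
          (mct σ = mct μ + 1) ∧
          σ u2 = some cmin ∧ μ' u2 = some cmin ∧ μ u2 ≠ some cmin ∧ u2 ≠ i ∧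
          (∀ k ck, σ k ≠ μ k → μ k = some ck → ¬ StrictPrec prec (some ck) (some cmin)) ∧
          (∀ k, σ k ≠ μ k → μ k ≠ some cmin) ∧
          Compliant P σ := by
      by_cases hcc : cur = cmin
      · rw [hcc] at hz'
        refine ⟨Function.update μ z (some cmin), z, ?_, ?_, ?_, hz', ?_, hzi, ?_, ?_, ?_⟩
        · intro c
          have h := cnt_update μ z (some cmin) c
          rw [hz0] at h
          by_cases hc : c = cmin
          · subst hc; simp at h ⊢; omega
          · have hff : (some cmin = some c) = False := by
              simp only [Option.some_inj, eq_iff_iff, iff_false]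
              exact fun hx => hc hx.symm
            simp [hff, hc] at h ⊢; omega
        · have h := mct_update μ z (some cmin)
          rw [hz0] at h
          simpa using h
        · simp [Function.update]
        · rw [hz0]; simp
        · intro k ck hne hk
          have hkz : k = z := by
            by_contra hkz
            exact hne (Function.update_of_ne hkz _ _)
          subst hkz
          rw [hz0] at hk; exact nomatch hk
        · intro k hne
          have hkz : k = z := by
            by_contra hkz
            exact hne (Function.update_of_ne hkz _ _)
          subst hkz
          rw [hz0]; exact fun h => nomatch h
        · intro k c hk
          by_cases hkz : k = z
          · subst hkz
            rw [Function.update_self] at hk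
            injection hk with hck
            subst hck
            exact (TE cmin k hzi).2 (hμ'c k cmin hz')
          · rw [Function.update_of_ne hkz _ _] at hk
            exact hμc k c hk
      · obtain ⟨hYX, hiYP, hu''YP, hu''cm, hYnm, hYcnt, hYmct⟩ := h16 hcc
        have hzYP : z ∉ YP := fun h => hzX (hYX h)
        have hσeq : hyb μ' μ (insert z YP) = Function.update (hyb μ' μ YP) z (μ' z) :=
          hyb_insert μ' μ YP z
        have hold : hyb μ' μ YP z = μ z := hyb_not_mem μ' μ hzYP
        refine ⟨hyb μ' μ (insert z YP), u'', ?_, ?_, ?_, hu''cm, hYnm u'' hu''YP,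
          fun h => hiYP (h ▸ hu''YP), ?_, ?_, ?_⟩
        · intro c
          have h := cnt_update (hyb μ' μ YP) z (μ' z) c
          rw [← hσeq, hold, hz0, hz'] at h
          have h2 := hYcnt c
          by_cases hc : c = cur
          · subst hc
            by_cases hc2 : c = cmin
            · exact absurd hc2 hcc
            · simp [hc2] at h h2 ⊢; omega
          · have hccf : (some cur = some c) = False := by
              simp only [Option.some_inj, eq_iff_iff, iff_false]
              exact fun hx => hc hx.symm
            by_cases hc2 : c = cmin
            · subst hc2; simp [hccf, hc] at h h2 ⊢; omega
            · simp [hccf, hc, hc2] at h h2 ⊢; omega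
        · have h := mct_update (hyb μ' μ YP) z (μ' z)
          rw [← hσeq, hold, hz0, hz'] at h
          simp at h
          omega
        · have hu''z : u'' ≠ z := by rintro rfl; exact hzYP hu''YP
          rw [hσeq, Function.update_of_ne hu''z _ _, hyb_mem μ' μ hu''YP, hu''cm]
        · intro k ck hne hk
          by_cases hkmem : k ∈ insert z YP
          · rcases Finset.mem_insert.1 hkmem with hkz | hkY
            · subst hkz; rw [hz0] at hk; exact nomatch hk
            · obtain ⟨ck', hck', hns⟩ := h3 k (hYX hkY)
              rw [hk] at hck'
              injection hck' with hh
              rwa [← hh] at hns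
          · exfalso; exact hne (hyb_not_mem μ' μ hkmem)
        · intro k hne
          by_cases hkmem : k ∈ insert z YP
          · rcases Finset.mem_insert.1 hkmem with hkz | hkY
            · subst hkz; rw [hz0]; exact fun h => nomatch h
            · exact hYnm k hkY
          · exfalso; exact hne (hyb_not_mem μ' μ hkmem)
        · intro k c hk
          by_cases hkmem : k ∈ insert z YP
          · rw [hyb_mem μ' μ hkmem] at hk
            exact hμ'cP k c hk
          · rw [hyb_not_mem μ' μ hkmem] at hk
            exact hμc k c hk
    -- (V'') dichotomy
    by_cases hj1 : ∃ j1 : I, μ j1 = some cmin ∧ P cmin (some u2) (some j1)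
    · obtain ⟨j1, hj1m, hj1p⟩ := hj1
      have hj1σ : σ j1 = μ j1 := by
        by_contra hne
        exact hB j1 hne hj1m
      have hνc : ∀ c, cnt (Function.update σ j1 none) c = cnt μ c := by
        intro c
        have h := cnt_update σ j1 none c
        rw [hj1σ, hj1m] at h
        have h2 := hσc c
        by_cases hc : c = cmin
        · subst hc; simp at h h2 ⊢; omega
        · have hff : (some cmin = some c) = False := by
            simp only [Option.some_inj, eq_iff_iff, iff_false]
            exact fun hx => hc hx.symm
          simp [hff, hc] at h h2 ⊢; omega
      have hνm : mct (Function.update σ j1 none) = mct μ := by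
        have h := mct_update σ j1 none
        rw [hj1σ, hj1m] at h
        simp at h
        omega
      have hνcomp : Compliant P (Function.update σ j1 none) := by
        intro k c hk
        by_cases hkj : k = j1
        · subst hkj; rw [Function.update_self] at hk; exact nomatch hk
        · rw [Function.update_of_ne hkj _ _] at hk; exact hcompσ k c hk
      obtain ⟨hg1, hg2, hg3⟩ := goodP (Function.update σ j1 none) hνc hνm hνcomp
      refine hresp ⟨u2, j1, cmin, hj1m, ?_, hj1p, Function.update σ j1 none, hg1, hνcomp,
        ?_, ?_, ?_, hg2, hg3⟩
      · -- StrictPrec (some cmin) (μ u2)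
        have hneq : σ u2 ≠ μ u2 := by rw [hσu2]; exact fun h => hu2m h.symm
        cases hμu2 : μ u2 with
        | none => exact sp_some_none prec cmin
        | some c2 =>
          have hns := hA u2 c2 hneq hμu2
          have hc2ne : c2 ≠ cmin := by
            rintro rfl; exact hu2m hμu2
          exact sp_flip prec hTotal hAnti hc2ne hns
      · intro k ck hk hstrict
        by_cases hkj : k = j1
        · subst hkj
          rw [hj1m] at hk
          injection hk with hh
          rw [← hh] at hstrict
          exact absurd hstrict (sp_irrefl prec cmin)
        · rw [Function.update_of_ne hkj _ _]
          by_contra hne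
          exact hA k ck hne hk hstrict
      · intro l hl hpl
        by_cases hlj : l = j1
        · subst hlj; exact absurd hpl (fun h => Pasym cmin _ _ hj1p h)
        · rw [Function.update_of_ne hlj _ _]
          by_contra hne
          exact hB l hne hl
      · have hu2j1 : u2 ≠ j1 := by
          rintro rfl; exact hu2m hj1m
        rw [Function.update_of_ne hu2j1 _ _, hσu2]
    · push_neg at hj1
      have hALLS : ∀ l : I, μ l = some cmin → P cmin (some l) (some u2) := by
        intro l hl
        rcases Ptri cmin (some l) (some u2) with he | hp | hp
        · exfalso
          injection he with he'
          rw [he'] at hl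
          exact hu2m hl
        · exact hp
        · exact absurd hp (hj1 l hl)
      -- (V') dichotomy
      by_cases hj0 : ∃ j0 : I, μ' j0 = some cmin ∧ P' cmin (some u') (some j0)
      · obtain ⟨j0, hj0m, hj0p⟩ := hj0
        have hj0X : j0 ∉ Xpre := fun h => h12 j0 h hj0m
        have hτ0 : hyb μ μ' Xpre j0 = μ' j0 := hyb_not_mem μ μ' hj0X
        have hτc : ∀ c, cnt (Function.update (hyb μ μ' Xpre) j0 none) c = cnt μ' c := by
          intro c
          have h := cnt_update (hyb μ μ' Xpre) j0 none c
          rw [hτ0, hj0m] at h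
          have h2 := h9 c
          by_cases hc : c = cmin
          · subst hc; simp at h h2 ⊢; omega
          · have hff : (some cmin = some c) = False := by
              simp only [Option.some_inj, eq_iff_iff, iff_false]
              exact fun hx => hc hx.symm
            simp [hff, hc] at h h2 ⊢; omega
        have hτm : mct (Function.update (hyb μ μ' Xpre) j0 none) = mct μ' := by
          have h := mct_update (hyb μ μ' Xpre) j0 none
          rw [hτ0, hj0m] at h
          simp at h
          omega
        have hτcomp : Compliant P' (Function.update (hyb μ μ' Xpre) j0 none) := by
          intro k c hk
          by_cases hkj : k = j0
          · subst hkj; rw [Function.update_self] at hk; exact nomatch hk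
          · rw [Function.update_of_ne hkj _ _] at hk
            by_cases hkX : k ∈ Xpre
            · rw [hyb_mem μ μ' hkX] at hk; exact hμc' k c hk
            · rw [hyb_not_mem μ μ' hkX] at hk; exact hμ'c k c hk
        obtain ⟨hg1, hg2, hg3⟩ :=
          goodP' (Function.update (hyb μ μ' Xpre) j0 none) hτc hτm hτcomp
        refine hresp' ⟨u', j0, cmin, hj0m, ?_, hj0p,
          Function.update (hyb μ μ' Xpre) j0 none, hg1, hτcomp, ?_, ?_, ?_, hg2, hg3⟩
        · rcases h15 with hnone | ⟨c5, hc5, hstr⟩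
          · rw [hnone]; exact sp_some_none prec cmin
          · rw [hc5]; exact hstr
        · intro k ck hk hstrict
          by_cases hkj : k = j0
          · subst hkj
            rw [hj0m] at hk
            injection hk with hh
            rw [← hh] at hstrict
            exact absurd hstrict (sp_irrefl prec cmin)
          · rw [Function.update_of_ne hkj _ _]
            by_cases hkX : k ∈ Xpre
            · exact absurd hstrict (h11 k hkX ck hk)
            · exact hyb_not_mem μ μ' hkX
        · intro l hl hpl
          by_cases hlj : l = j0
          · subst hlj; exact absurd hpl (fun h => P'asym cmin _ _ hj0p h)
          · rw [Function.update_of_ne hlj _ _]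
            by_cases hlX : l ∈ Xpre
            · exact absurd hl (h12 l hlX)
            · exact hyb_not_mem μ μ' hlX
        · have hu'j0 : u' ≠ j0 := by
            rintro rfl; exact h12 u' h13 hj0m
          rw [Function.update_of_ne hu'j0 _ _, hyb_mem μ μ' h13, h14]
      · push_neg at hj0
        have hALLT : ∀ l : I, μ' l = some cmin → P' cmin (some l) (some u') := by
          intro l hl
          rcases P'tri cmin (some l) (some u') with he | hp | hp
          · exfalso
            injection he with he'
            rw [he'] at hl
            exact h12 u' h13 hl
          · exact hp
          · exact absurd hp (hj0 l hl)
        have hPuu : P cmin (some u') (some u2) := hALLS u' h14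
        have hP'uu : P' cmin (some u2) (some u') := hALLT u2 hu2'
        by_cases hu'i : u' = i
        · subst hu'i
          have : P' cmin (some u') (some u2) :=
            T2 cmin (some u2) (by simp [hu2i]) hPuu
          exact P'asym cmin _ _ this hP'uu
        · exact P'asym cmin _ _ ((T1 cmin u' u2 hu'i hu2i).2 hPuu) hP'uu
  -- the chain recursion
  have REC : ∀ (n : ℕ) (X Xpre YP : Finset I) (cur cmin : C) (u' u'' : I),
      (Finset.univ \ X).card ≤ n →
      ChainInv prec μ μ' i X Xpre YP cur cmin u' u'' → False := by
    intro n
    induction n with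
    | zero =>
      intro X Xpre YP cur cmin u' u'' hcard hinv
      obtain ⟨h1, h2, h3, h4, h5, h6, h7, h8, h9, h10, h11, h12, h13, h14, h15, h16⟩ := hinv
      refine E2L X cur h4 h5 ?_
      intro x hx _
      exfalso
      have hmem : x ∈ Finset.univ \ X := by simp [hx]
      have := Finset.card_pos.2 ⟨x, hmem⟩
      omega
    | succ n IH =>
      intro X Xpre YP cur cmin u' u'' hcard hinv
      obtain ⟨h1, h2, h3, h4, h5, h6, h7, h8, h9, h10, h11, h12, h13, h14, h15, h16⟩ := hinv
      by_cases hex : ∃ x, x ∉ X ∧ μ' x = some cur ∧ μ x ≠ some cur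
      · obtain ⟨x, hxX, hx', hxne⟩ := hex
        cases hμx : μ x with
        | none =>
          exact TERM X Xpre YP cur cmin u' u'' x hxX hx' hμx
            ⟨h1, h2, h3, h4, h5, h6, h7, h8, h9, h10, h11, h12, h13, h14, h15, h16⟩
        | some c' =>
          have hc'c : c' ≠ cur := by
            rintro rfl
            exact hxne hμx
          have hxi : x ≠ i := by
            rintro rfl
            exact hxX h1
          have hcard' : (Finset.univ \ insert x X).card ≤ n := by
            have hmem : x ∈ Finset.univ \ X := by simp [hxX]
            have hdq : Finset.univ \ insert x X = (Finset.univ \ X).erase x := by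
              ext k
              simp only [Finset.mem_sdiff, Finset.mem_univ, true_and, Finset.mem_insert,
                Finset.mem_erase]
              tauto
            rw [hdq, Finset.card_erase_of_mem hmem]
            have := Finset.card_pos.2 ⟨x, hmem⟩
            omega
          have hhyb : hyb μ μ' (insert x X) = Function.update (hyb μ μ' X) x (μ x) :=
            hyb_insert μ μ' X x
          have hhybx : hyb μ μ' X x = μ' x := hyb_not_mem μ μ' hxX
          have h4' : ∀ c, cnt (hyb μ μ' (insert x X)) c
              = cnt μ' c + (if c = c' then 1 else 0) := by
            intro c
            have h := cnt_update (hyb μ μ' X) x (μ x) c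
            rw [← hhyb, hhybx, hx', hμx] at h
            have h2c := h4 c
            by_cases hc : c = cur
            · subst hc
              have hf : (some c' = some c) = False := by
                simp only [Option.some_inj, eq_iff_iff, iff_false]
                exact fun hx2 => hc'c (hx2.trans rfl)
              simp [hf, hc'c.symm] at h h2c ⊢
              omega
            · have hf : (some cur = some c) = False := by
                simp only [Option.some_inj, eq_iff_iff, iff_false]
                exact fun hx2 => hc hx2.symm
              by_cases hc2 : c = c'
              · subst hc2; simp [hf, hc] at h h2c ⊢; omega
              · have hf2 : (some c' = some c) = False := by
                  simp only [Option.some_inj, eq_iff_iff, iff_false]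
                  exact fun hx2 => hc2 hx2.symm
                simp [hf, hf2, hc, hc2] at h h2c ⊢; omega
          have h5' : mct (hyb μ μ' (insert x X)) = mct μ' + 1 := by
            have h := mct_update (hyb μ μ' X) x (μ x)
            rw [← hhyb, hhybx, hx', hμx] at h
            simp at h
            omega
          have h1' : i ∈ insert x X := Finset.mem_insert_of_mem h1
          by_cases hmin : StrictPrec prec (some c') (some cmin)
          · -- MIN RESET
            refine IH (insert x X) (insert x X) ∅ c' c' x x hcard' ?_
            have h2' : ∀ k ∈ insert x X, ∀ ck, μ' k = some ck →
                ¬ StrictPrec prec (some ck) (some c') := by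
              intro k hk ck hck
              rcases Finset.mem_insert.1 hk with rfl | hkX
              · rw [hx'] at hck
                injection hck with hcur
                subst hcur
                intro hs
                exact h6 (sp_trans prec hTrans hs hmin)
              · intro hs
                exact h2 k hkX ck hck (sp_trans prec hTrans hs hmin)
            refine ⟨h1', h2', ?_, h4', h5', sp_irrefl prec c',
              Finset.Subset.refl _, h1', h4', h5', h2', ?_,
              Finset.mem_insert_self x X, hμx, ?_, ?_⟩
            · intro k hk
              rcases Finset.mem_insert.1 hk with rfl | hkX
              · exact ⟨c', hμx, sp_irrefl prec c'⟩
              · obtain ⟨ck, hck, hns⟩ := h3 k hkX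
                exact ⟨ck, hck, fun hs => hns (sp_trans prec hTrans hs hmin)⟩
            · intro k hk hck
              rcases Finset.mem_insert.1 hk with rfl | hkX
              · rw [hx'] at hck
                injection hck with hcur
                rw [hcur] at h6
                exact h6 hmin
              · exact h2 k hkX c' hck hmin
            · exact Or.inr ⟨cur, hx', sp_trans2 prec hTrans hTotal hAnti hmin h6⟩
            · intro hne
              exact absurd rfl hne
          · -- NO RESET, extend chain
            have h2'' : ∀ k ∈ insert x X, ∀ ck, μ' k = some ck →
                ¬ StrictPrec prec (some ck) (some cmin) := by
              intro k hk ck hck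
              rcases Finset.mem_insert.1 hk with rfl | hkX
              · rw [hx'] at hck
                injection hck with hcur
                subst hcur
                exact h6
              · exact h2 k hkX ck hck
            have h3'' : ∀ k ∈ insert x X, ∃ ck, μ k = some ck ∧
                ¬ StrictPrec prec (some ck) (some cmin) := by
              intro k hk
              rcases Finset.mem_insert.1 hk with rfl | hkX
              · exact ⟨c', hμx, hmin⟩
              · exact h3 k hkX
            by_cases hcc : cur = cmin
            · -- ENTRY into cmin: start a new suffix block
              refine IH (insert x X) Xpre {x} c' cmin u' x hcard' ?_
              refine ⟨h1', h2'', h3'', h4', h5', hmin,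
                Finset.Subset.trans h7 (Finset.subset_insert x X), h8, h9, h10,
                h11, h12, h13, h14, h15, ?_⟩
              intro hnec'
              have hxcm : μ' x = some cmin := by rw [hx', hcc]
              have hμxnc : μ x ≠ some cmin := by
                rw [hμx]
                intro hh
                injection hh with hh2
                exact hnec' hh2
              refine ⟨Finset.singleton_subset_iff.2 (Finset.mem_insert_self x X),
                by simp only [Finset.mem_singleton]; exact fun h => hxi h.symm, Finset.mem_singleton_self x, hxcm, ?_, ?_, ?_⟩
              · intro k hk
                rw [Finset.mem_singleton] at hk
                subst hk
                exact hμxnc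
              · intro c
                have hsing : ({x} : Finset I) = insert x ∅ := rfl
                have hh : hyb μ' μ {x} = Function.update μ x (μ' x) := by
                  rw [hsing, hyb_insert μ' μ ∅ x, hyb_empty]
                have h := cnt_update μ x (μ' x) c
                rw [← hh, hμx, hxcm] at h
                by_cases hc : c = c'
                · have hcn : c ≠ cmin := by rw [hc]; exact hnec'
                  have hf2 : (some cmin = some c) = False := by
                    simp only [Option.some_inj, eq_iff_iff, iff_false]
                    exact fun hx2 => hcn hx2.symm
                  have hf1 : (some c' = some c) = True := by
                    simp only [Option.some_inj, eq_iff_iff, iff_true]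
                    exact hc.symm
                  simp [hf1, hf2, hc, hcn, hnec', Ne.symm hnec'] at h ⊢
                  omega
                · have hf1 : (some c' = some c) = False := by
                    simp only [Option.some_inj, eq_iff_iff, iff_false]
                    exact fun hx2 => hc hx2.symm
                  by_cases hc2 : c = cmin
                  · have hf2 : (some cmin = some c) = True := by
                      simp only [Option.some_inj, eq_iff_iff, iff_true]
                      exact hc2.symm
                    simp [hf1, hf2, hc, hc2, hnec', Ne.symm hnec'] at h ⊢
                    omega
                  · have hf2 : (some cmin = some c) = False := by
                      simp only [Option.some_inj, eq_iff_iff, iff_false]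
                      exact fun hx2 => hc2 hx2.symm
                    simp [hf1, hf2, hc, hc2, hnec', Ne.symm hnec'] at h ⊢
                    omega
              · have hsing : ({x} : Finset I) = insert x ∅ := rfl
                have hh : hyb μ' μ {x} = Function.update μ x (μ' x) := by
                  rw [hsing, hyb_insert μ' μ ∅ x, hyb_empty]
                have h := mct_update μ x (μ' x)
                rw [← hh, hμx, hxcm] at h
                simp at h
                omega
            · -- CONTINUE the suffix block
              obtain ⟨hYX, hiYP, hu''YP, hu''cm, hYnm, hYcnt, hYmct⟩ := h16 hcc
              refine IH (insert x X) Xpre (insert x YP) c' cmin u' u'' hcard' ?_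
              refine ⟨h1', h2'', h3'', h4', h5', hmin,
                Finset.Subset.trans h7 (Finset.subset_insert x X), h8, h9, h10,
                h11, h12, h13, h14, h15, ?_⟩
              intro hnec'
              have hxYP : x ∉ YP := fun h => hxX (hYX h)
              have hins : hyb μ' μ (insert x YP) = Function.update (hyb μ' μ YP) x (μ' x) :=
                hyb_insert μ' μ YP x
              have holdx : hyb μ' μ YP x = μ x := hyb_not_mem μ' μ hxYP
              refine ⟨?_, ?_, Finset.mem_insert_of_mem hu''YP, hu''cm, ?_, ?_, ?_⟩
              · intro k hk
                rcases Finset.mem_insert.1 hk with rfl | hkY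
                · exact Finset.mem_insert_self k X
                · exact Finset.mem_insert_of_mem (hYX hkY)
              · intro hik
                rcases Finset.mem_insert.1 hik with hik' | hik'
                · exact hxi hik'.symm
                · exact hiYP hik'
              · intro k hk
                rcases Finset.mem_insert.1 hk with rfl | hkY
                · rw [hμx]
                  intro hh
                  injection hh with hh2
                  exact hnec' hh2
                · exact hYnm k hkY
              · intro c
                have h := cnt_update (hyb μ' μ YP) x (μ' x) c
                rw [← hins, holdx, hμx, hx'] at h
                have h2c := hYcnt c
                have hccur : c' ≠ cur := hc'c
                by_cases hc : c = c'
                · have hcn : c ≠ cmin := by rw [hc]; exact hnec'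
                  have hc3 : c ≠ cur := by rw [hc]; exact hccur
                  have hf1 : (some c' = some c) = True := by
                    simp only [Option.some_inj, eq_iff_iff, iff_true]
                    exact hc.symm
                  have hf2 : (some cur = some c) = False := by
                    simp only [Option.some_inj, eq_iff_iff, iff_false]
                    exact fun hx2 => hc3 hx2.symm
                  simp [hf1, hf2, hc, hcn, hc3, hnec', Ne.symm hnec', hccur,
                    Ne.symm hccur, hcc, Ne.symm hcc] at h h2c ⊢
                  omega
                · have hf1 : (some c' = some c) = False := by
                    simp only [Option.some_inj, eq_iff_iff, iff_false]
                    exact fun hx2 => hc hx2.symm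
                  by_cases hc3 : c = cur
                  · have hcn : c ≠ cmin := by rw [hc3]; exact hcc
                    have hf2 : (some cur = some c) = True := by
                      simp only [Option.some_inj, eq_iff_iff, iff_true]
                      exact hc3.symm
                    simp [hf1, hf2, hc, hc3, hcn, hnec', Ne.symm hnec', hccur,
                      Ne.symm hccur, hcc, Ne.symm hcc] at h h2c ⊢
                    omega
                  · have hf2 : (some cur = some c) = False := by
                      simp only [Option.some_inj, eq_iff_iff, iff_false]
                      exact fun hx2 => hc3 hx2.symm
                    by_cases hc2 : c = cmin
                    · simp [hf1, hf2, hc, hc3, hc2, hnec', Ne.symm hnec', hccur,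
                        Ne.symm hccur, hcc, Ne.symm hcc] at h h2c ⊢
                      omega
                    · simp [hf1, hf2, hc, hc3, hc2, hnec', Ne.symm hnec', hccur,
                        Ne.symm hccur, hcc, Ne.symm hcc] at h h2c ⊢
                      omega
              · have h := mct_update (hyb μ' μ YP) x (μ' x)
                rw [← hins, holdx, hμx, hx'] at h
                simp at h
                omega
      · push_neg at hex
        refine E2L X cur h4 h5 ?_
        intro x hx hx'
        exact hex x hx hx'
  -- kickoff
  obtain ⟨c0, hμi⟩ : ∃ c0, μ i = some c0 := by
    cases h : μ i with
    | none => exact absurd h hi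
    | some c0 => exact ⟨c0, rfl⟩
  have hhyb0 : hyb μ μ' ({i} : Finset I) = Function.update μ' i (μ i) := by
    have hsing : ({i} : Finset I) = insert i ∅ := rfl
    rw [hsing, hyb_insert μ μ' ∅ i, hyb_empty]
  have h40 : ∀ c, cnt (hyb μ μ' ({i} : Finset I)) c
      = cnt μ' c + (if c = c0 then 1 else 0) := by
    intro c
    have h := cnt_update μ' i (μ i) c
    rw [← hhyb0, hni, hμi] at h
    by_cases hc : c = c0
    · subst hc; simp at h ⊢; omega
    · have hf : (some c0 = some c) = False := by
        simp only [Option.some_inj, eq_iff_iff, iff_false]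
        exact fun hx2 => hc hx2.symm
      simp [hf, hc] at h ⊢; omega
  have h50 : mct (hyb μ μ' ({i} : Finset I)) = mct μ' + 1 := by
    have h := mct_update μ' i (μ i)
    rw [← hhyb0, hni, hμi] at h
    simp at h
    omega
  have h20 : ∀ k ∈ ({i} : Finset I), ∀ ck, μ' k = some ck →
      ¬ StrictPrec prec (some ck) (some c0) := by
    intro k hk ck hck
    rw [Finset.mem_singleton] at hk
    subst hk
    rw [hni] at hck
    exact nomatch hck
  have h30 : ∀ k ∈ ({i} : Finset I), ∃ ck, μ k = some ck ∧
      ¬ StrictPrec prec (some ck) (some c0) := by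
    intro k hk
    rw [Finset.mem_singleton] at hk
    subst hk
    exact ⟨c0, hμi, sp_irrefl prec c0⟩
  have h120 : ∀ k ∈ ({i} : Finset I), μ' k ≠ some c0 := by
    intro k hk hck
    rw [Finset.mem_singleton] at hk
    subst hk
    rw [hni] at hck
    exact nomatch hck
  exact REC (Finset.univ \ {i}).card {i} {i} ∅ c0 c0 i i le_rfl
    ⟨Finset.mem_singleton_self i, h20, h30, h40, h50, sp_irrefl prec c0,
      Finset.Subset.refl _, Finset.mem_singleton_self i, h40, h50, h20, h120,
      Finset.mem_singleton_self i, hμi, Or.inl hni, fun hne => absurd rfl hne⟩
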